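/- Let G be a finite connected graph with a signature λ: E(G) → {−1, +1}. Then the following are equivalent: (1) every cycle of G has an even number of edges e with λ(e) = −1; (2) there exists σ: V(G) → {−1, +1} with λ({u,v}) = σ(u)·σ(v) for every edge {u,v}; (3) the set of edges with λ(e) = −1 forms an edge cut of G (i.e., the set of edges between S and V(G)∖S for some S ⊆ V(G)). -/

import Mathlib

open SimpleGraph

section HararyAux

variable {V : Type*} [DecidableEq V] {G : SimpleGraph V}

private lemma harary_prod_eq_pow (lam : Sym2 V → ℤ) :
    ∀ (l : List (Sym2 V)), (∀ e ∈ l, lam e = 1 ∨ lam e = -1) →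
    (l.map lam).prod = (-1) ^ (l.filter (fun e => decide (lam e = -1))).length := by
  intro l
  induction l with
  | nil => simp
  | cons e t ih =>
    intro hl
    have he := hl e (by simp)
    have ht := ih fun x hx => hl x (List.mem_cons_of_mem _ hx)
    rcases he with he | he
    · rw [List.map_cons, List.prod_cons, ht, List.filter_cons]
      simp [he]
    · rw [List.map_cons, List.prod_cons, ht, List.filter_cons]
      simp [he, pow_succ, mul_comm]

private lemma harary_path_closed_eq_nil {v : V} (p : G.Walk v v) (hp : p.IsPath) :
    p = Walk.nil := by
  cases p with
  | nil => rfl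
  | cons h q =>
    exfalso
    have hnd := hp.support_nodup
    rw [Walk.support_cons] at hnd
    exact (List.nodup_cons.mp hnd).1 q.end_mem_support

private lemma harary_path_edge_back {u v : V} :
    ∀ (q : G.Walk u v), q.IsPath → s(v, u) ∈ q.edges → q.edges = [s(u, v)] := by
  intro q
  induction q with
  | nil => simp
  | @cons u y v h q ih =>
    intro hp he
    rw [Walk.edges_cons] at he ⊢
    rcases List.mem_cons.mp he with he | he
    · rcases Sym2.eq_iff.mp he with ⟨hvu, huy⟩ | ⟨hvy, -⟩
      · exfalso
        subst hvu
        have hnd := hp.support_nodup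
        rw [Walk.support_cons] at hnd
        exact (List.nodup_cons.mp hnd).1 q.end_mem_support
      · subst hvy
        have hq : q = Walk.nil := harary_path_closed_eq_nil q ((Walk.cons_isPath_iff h q).mp hp).1
        subst hq
        simp
    · exfalso
      have hu : u ∈ q.support := q.snd_mem_support_of_mem_edges he
      exact ((Walk.cons_isPath_iff h q).mp hp).2 hu

private lemma harary_exists_split (lam : Sym2 V → ℤ) {x : V} (w : G.Walk x x)
    (hc : 2 ≤ w.support.tail.count x) :
    ∃ (w1 w2 : G.Walk x x),
      (w.edges.map lam).prod = (w1.edges.map lam).prod * (w2.edges.map lam).prod ∧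
      w1.length < w.length ∧ w2.length < w.length := by
  cases w with
  | nil => simp at hc
  | @cons _ y _ h q =>
    have hc2 : 2 ≤ q.support.count x := by simpa [Walk.support_cons] using hc
    have hx : x ∈ q.support := by
      have : 0 < q.support.count x := by omega
      exact List.count_pos_iff.mp this
    have hedges : q.edges = (q.takeUntil x hx).edges ++ (q.dropUntil x hx).edges := by
      rw [← Walk.edges_append, q.take_spec hx]
    have hlenq : q.length = (q.takeUntil x hx).length + (q.dropUntil x hx).length := by
      rw [← Walk.length_append, q.take_spec hx]
    have hsup : q.support = (q.takeUntil x hx).support ++ (q.dropUntil x hx).support.tail := by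
      rw [← Walk.support_append, q.take_spec hx]
    have h1 : (q.takeUntil x hx).support.count x = 1 := q.count_support_takeUntil_eq_one hx
    have h3 : 1 ≤ (q.dropUntil x hx).support.tail.count x := by
      rw [hsup, List.count_append] at hc2
      omega
    have h5 : 1 ≤ (q.dropUntil x hx).length := by
      have htl : (q.dropUntil x hx).support.tail.length = (q.dropUntil x hx).length := by
        rw [List.length_tail, Walk.length_support]
        omega
      have hne : (q.dropUntil x hx).support.tail ≠ [] := by
        intro hnil
        rw [hnil] at h3
        simp at h3
      have := List.length_pos_iff.mpr hne
      omega
    refine ⟨Walk.cons h (q.takeUntil x hx), q.dropUntil x hx, ?_, ?_, ?_⟩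
    · rw [Walk.edges_cons, Walk.edges_cons, hedges, List.map_cons, List.prod_cons,
        List.map_append, List.prod_append, List.map_cons, List.prod_cons, mul_assoc]
    · simp only [Walk.length_cons]
      omega
    · simp only [Walk.length_cons]
      omega

private lemma harary_closed_prod (lam : Sym2 V → ℤ)
    (hval : ∀ e ∈ G.edgeSet, lam e = 1 ∨ lam e = -1)
    (hcyc : ∀ (v : V) (w : G.Walk v v), w.IsCycle → (w.edges.map lam).prod = 1) :
    ∀ (n : ℕ) (v : V) (w : G.Walk v v), w.length ≤ n → (w.edges.map lam).prod = 1 := by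
  intro n
  induction n with
  | zero =>
    intro v w hw
    cases w with
    | nil => simp
    | cons h q => simp [Walk.length_cons] at hw
  | succ n IH =>
    intro v w hw
    by_cases hnd : w.support.tail.Nodup
    · cases w with
      | nil => simp
      | @cons _ u _ h q =>
        have hq : q.IsPath := by
          rw [Walk.isPath_def]
          simpa [Walk.support_cons] using hnd
        by_cases he : s(v, u) ∈ q.edges
        · have hqe := harary_path_edge_back q hq he
          rw [Walk.edges_cons, hqe]
          have hev : s(v, u) ∈ G.edgeSet := h
          rcases hval _ hev with h1 | h1 <;>
            simp [Sym2.eq_swap (a := u) (b := v), h1]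
        · exact hcyc v (Walk.cons h q) ((Walk.cons_isCycle_iff q h).mpr ⟨hq, he⟩)
    · obtain ⟨x, hxdup⟩ := List.exists_duplicate_iff_not_nodup.mpr hnd
      have hxc : 2 ≤ w.support.tail.count x := List.duplicate_iff_two_le_count.mp hxdup
      have hxs : x ∈ w.support := List.mem_of_mem_tail hxdup.mem
      have hprod : ((w.rotate x hxs).edges.map lam).prod = (w.edges.map lam).prod :=
        ((w.rotate_edges x hxs).perm.map lam).prod_eq
      have hcnt : 2 ≤ (w.rotate x hxs).support.tail.count x := by
        rw [(w.support_rotate x hxs).perm.count_eq]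
        exact hxc
      have hlen : (w.rotate x hxs).length = w.length := by
        have h1 := (w.rotate_edges x hxs).perm.length_eq
        rwa [Walk.length_edges, Walk.length_edges] at h1
      obtain ⟨w1, w2, hsplit, hl1, hl2⟩ := harary_exists_split lam (w.rotate x hxs) hcnt
      rw [← hprod, hsplit, IH x w1 (by omega), IH x w2 (by omega)]
      norm_num

end HararyAux

/-- Harary's balance criterion for a signature `λ : E(G) → {−1,+1}` on a finite connected
graph: (1) every cycle has an even number of `−1`-edges iff (2) `λ` is a coboundary
`λ{u,v} = σ(u)σ(v)` iff (3) the `−1`-edges form an edge cut. -/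
theorem stmt19 {V : Type*} [Fintype V] (G : SimpleGraph V) (hconn : G.Connected)
    (lam : Sym2 V → ℤ) (hval : ∀ e ∈ G.edgeSet, lam e = 1 ∨ lam e = -1) :
    ((∀ (v : V) (w : G.Walk v v), w.IsCycle →
        Even (w.edges.filter (fun e => decide (lam e = -1))).length) ↔
      (∃ σ : V → ℤ, (∀ v, σ v = 1 ∨ σ v = -1) ∧
        ∀ u v : V, G.Adj u v → lam s(u, v) = σ u * σ v)) ∧
    ((∀ (v : V) (w : G.Walk v v), w.IsCycle →
        Even (w.edges.filter (fun e => decide (lam e = -1))).length) ↔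
      (∃ S : Set V, ∀ u v : V, G.Adj u v →
        (lam s(u, v) = -1 ↔ ((u ∈ S) ↔ v ∉ S)))) := by
  classical
  have hω : ∀ (a b : V) (p : G.Walk a b),
      (p.edges.map lam).prod
        = (-1 : ℤ) ^ (p.edges.filter (fun e => decide (lam e = -1))).length :=
    fun a b p => harary_prod_eq_pow lam p.edges
      (fun e hep => hval e (p.edges_subset_edgeSet hep))
  have hA_iff : (∀ (v : V) (w : G.Walk v v), w.IsCycle →
        Even (w.edges.filter (fun e => decide (lam e = -1))).length) ↔
      (∀ (v : V) (w : G.Walk v v), w.IsCycle → (w.edges.map lam).prod = 1) := by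
    constructor
    · intro h v w hw
      rw [hω, neg_one_pow_eq_one_iff_even (by norm_num)]
      exact h v w hw
    · intro h v w hw
      have := h v w hw
      rw [hω, neg_one_pow_eq_one_iff_even (by norm_num)] at this
      exact this
  have hAB : (∀ (v : V) (w : G.Walk v v), w.IsCycle →
        Even (w.edges.filter (fun e => decide (lam e = -1))).length) ↔
      (∃ σ : V → ℤ, (∀ v, σ v = 1 ∨ σ v = -1) ∧
        ∀ u v : V, G.Adj u v → lam s(u, v) = σ u * σ v) := by
    constructor
    · intro hA
      have hcyc := hA_iff.mp hA
      haveI : Nonempty V := hconn.nonempty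
      obtain ⟨v0⟩ := ‹Nonempty V›
      let p : ∀ v : V, G.Walk v0 v := fun v => (hconn v0 v).some
      refine ⟨fun v => ((p v).edges.map lam).prod, ?_, ?_⟩
      · intro v
        dsimp only
        rw [hω]
        rcases Nat.even_or_odd ((p v).edges.filter
            (fun e => decide (lam e = -1))).length with hk | hk
        · left; exact hk.neg_one_pow
        · right; exact hk.neg_one_pow
      · intro u v h
        dsimp only
        have hσ : ∀ x : V, ((p x).edges.map lam).prod = 1 ∨
            ((p x).edges.map lam).prod = -1 := by
          intro x
          rw [hω]
          rcases Nat.even_or_odd ((p x).edges.filter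
              (fun e => decide (lam e = -1))).length with hk | hk
          · left; exact hk.neg_one_pow
          · right; exact hk.neg_one_pow
        set c : G.Walk v0 v0 := (p u).append (Walk.cons h (p v).reverse) with hcdef
        have hc : (c.edges.map lam).prod = 1 :=
          harary_closed_prod lam hval hcyc c.length v0 c le_rfl
        have hc2 : ((p u).edges.map lam).prod * (lam s(u, v) *
            ((p v).edges.map lam).prod) = 1 := by
          rw [hcdef] at hc
          simpa [Walk.edges_append, Walk.edges_cons, Walk.edges_reverse,
            List.map_append, List.prod_append, List.map_reverse, List.prod_reverse] using hc
        rcases hσ u with h1 | h1 <;> rcases hσ v with h2 | h2 <;>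
          rw [h1, h2] at hc2 ⊢ <;> linarith
    · rintro ⟨σ, hσ, hlam⟩
      have tele : ∀ (a b : V) (p : G.Walk a b), (p.edges.map lam).prod = σ a * σ b := by
        intro a b p
        induction p with
        | @nil a' => rcases hσ a' with h | h <;> rw [h] <;> norm_num
        | @cons a c b h q ih =>
          rw [Walk.edges_cons, List.map_cons, List.prod_cons, ih, hlam a c h]
          rcases hσ c with hc | hc <;> rw [hc] <;> ring
      intro v w hw
      have h1 : (w.edges.map lam).prod = 1 := by
        rw [tele]
        rcases hσ v with h | h <;> rw [h] <;> norm_num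
      rw [hω, neg_one_pow_eq_one_iff_even (by norm_num)] at h1
      exact h1
  have hBC : (∃ σ : V → ℤ, (∀ v, σ v = 1 ∨ σ v = -1) ∧
        ∀ u v : V, G.Adj u v → lam s(u, v) = σ u * σ v) ↔
      (∃ S : Set V, ∀ u v : V, G.Adj u v →
        (lam s(u, v) = -1 ↔ ((u ∈ S) ↔ v ∉ S))) := by
    constructor
    · rintro ⟨σ, hσ, hlam⟩
      refine ⟨{v | σ v = 1}, fun u v h => ?_⟩
      rw [hlam u v h]
      rcases hσ u with h1 | h1 <;> rcases hσ v with h2 | h2 <;>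
        simp [Set.mem_setOf_eq, h1, h2] <;> norm_num
    · rintro ⟨S, hS⟩
      refine ⟨fun v => if v ∈ S then 1 else -1, fun v => ?_, fun u v h => ?_⟩
      · by_cases hv : v ∈ S <;> simp [hv]
      · have hiff := hS u v h
        rcases hval s(u, v) h with h1 | h1 <;>
          by_cases hu : u ∈ S <;> by_cases hv : v ∈ S <;>
          simp [hu, hv, h1] at hiff ⊢ <;> tauto
  exact ⟨hAB, hAB.trans hBC⟩
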